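/- Let G be a group, H a subgroup of G, and σ_qs : G → G a group automorphism with σ_qs ∘ σ_qs = id, σ_qs(H) = H (hence σ_qs(N_G(H)) = N_G(H)). Assume N_G(H)/H is abelian, i.e. a·b·a⁻¹·b⁻¹ ∈ H for all a, b ∈ N_G(H). Let c ∈ G with c·σ_qs(c) ∈ Z(G), set σ = inn_c ∘ σ_qs, and let n ∈ N_G(H) satisfy c·σ_qs(c)·σ_qs(n)·n ∈ H. Then the map μ₀ : G/H → G/H, kH ↦ σ(k)·c·n·H is well defined, and for every a ∈ N_G(H) the G-equivariant bijection φ_a : G/H → G/H, kH ↦ k·a·H satisfies μ₀ ∘ φ_a ∘ μ₀ = φ_{σ_qs(a)}. -/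

import Mathlib

/-- **Key computation in the proof of Proposition 3.17.**
Let `σ_qs` be an involutive automorphism of `G` with `σ_qs(H) = H`, suppose
`N_G(H)/H` is abelian, let `c ∈ G` with `c·σ_qs(c) ∈ Z(G)`, set
`σ = inn_c ∘ σ_qs`, and let `n ∈ N_G(H)` satisfy `c·σ_qs(c)·σ_qs(n)·n ∈ H`. Then the
map `μ₀ : kH ↦ σ(k)·c·n·H` is well defined on `G/H`, and for every `a ∈ N_G(H)` the
`G`-equivariant bijection `φ_a : kH ↦ k·a·H` satisfies `μ₀ ∘ φ_a ∘ μ₀ = φ_{σ_qs(a)}`. -/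
theorem mu0_conj_translation {G : Type*} [Group G] (H : Subgroup G)
    (σqs : G →* G) (hσ : ∀ g, σqs (σqs g) = g) (hH : H.map σqs = H)
    (hab : ∀ a ∈ Subgroup.normalizer (H : Set G), ∀ b ∈ Subgroup.normalizer (H : Set G), a * b * a⁻¹ * b⁻¹ ∈ H)
    (c : G) (hc : c * σqs c ∈ Subgroup.center G)
    (n : G) (hn : n ∈ Subgroup.normalizer (H : Set G)) (hcn : c * σqs c * σqs n * n ∈ H) :
    ∃ μ₀ : G ⧸ H → G ⧸ H,
      (∀ k : G,
        μ₀ (k : G ⧸ H) = ((((MulAut.conj c).toMonoidHom.comp σqs) k * c * n : G) : G ⧸ H)) ∧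
      ∀ a ∈ Subgroup.normalizer (H : Set G), ∃ φa φb : G ⧸ H → G ⧸ H,
        (∀ k : G, φa (k : G ⧸ H) = ((k * a : G) : G ⧸ H)) ∧
        (∀ k : G, φb (k : G ⧸ H) = ((k * σqs a : G) : G ⧸ H)) ∧
        μ₀ ∘ φa ∘ μ₀ = φb := by
  -- σqs reflects and preserves membership in H
  have hHiff : ∀ h : G, σqs h ∈ H ↔ h ∈ H := by
    intro h
    constructor
    · intro hh
      rw [← hH] at hh
      obtain ⟨h', hh', he⟩ := hh
      have : σqs (σqs h') = σqs (σqs h) := by rw [he]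
      rw [hσ, hσ] at this
      rwa [← this]
    · intro hh
      rw [← hH]
      exact ⟨h, hh, rfl⟩
  -- σqs preserves the normalizer
  have hNmem : ∀ g ∈ Subgroup.normalizer (H : Set G), σqs g ∈ Subgroup.normalizer (H : Set G) := by
    intro g hg
    rw [Subgroup.mem_normalizer_iff] at hg ⊢
    intro h
    have : σqs g * h * (σqs g)⁻¹ = σqs (g * σqs h * g⁻¹) := by
      rw [map_mul, map_mul, hσ, map_inv]
    rw [this, hHiff, ← hg (σqs h), hHiff]
  have hz : ∀ g : G, g * (c * σqs c) = (c * σqs c) * g :=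
    fun g => Subgroup.mem_center_iff.mp hc g
  -- conjugation by elements of the normalizer
  have hconj : ∀ g ∈ Subgroup.normalizer (H : Set G), ∀ h ∈ H, g⁻¹ * h * g ∈ H := by
    intro g hg h hh
    have := (Subgroup.mem_normalizer_iff.mp (inv_mem hg) h).mp hh
    simpa using this
  -- μ₀ : well-defined
  refine ⟨fun x => Quotient.liftOn' x (fun k => ((c * σqs k * n : G) : G ⧸ H)) ?_, ?_, ?_⟩
  · intro k k' hkk'
    rw [QuotientGroup.leftRel_apply] at hkk'
    apply QuotientGroup.eq.mpr
    have h1 : σqs (k⁻¹ * k') ∈ H := (hHiff _).mpr hkk'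
    have : (c * σqs k * n)⁻¹ * (c * σqs k' * n) = n⁻¹ * σqs (k⁻¹ * k') * n := by
      rw [map_mul, map_inv]; group
    rw [this]
    exact hconj n hn _ h1
  · intro k
    have : ((MulAut.conj c).toMonoidHom.comp σqs) k * c * n = c * σqs k * n := by
      simp [MulAut.conj]
    rw [this]
    rfl
  · intro a ha
    refine ⟨fun x => Quotient.liftOn' x (fun k => ((k * a : G) : G ⧸ H)) ?_,
            fun x => Quotient.liftOn' x (fun k => ((k * σqs a : G) : G ⧸ H)) ?_,
            fun _ => rfl, fun _ => rfl, ?_⟩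
    · intro k k' hkk'
      rw [QuotientGroup.leftRel_apply] at hkk'
      apply QuotientGroup.eq.mpr
      have : (k * a)⁻¹ * (k' * a) = a⁻¹ * (k⁻¹ * k') * a := by group
      rw [this]
      exact hconj a ha _ hkk'
    · intro k k' hkk'
      rw [QuotientGroup.leftRel_apply] at hkk'
      apply QuotientGroup.eq.mpr
      have : (k * σqs a)⁻¹ * (k' * σqs a) = (σqs a)⁻¹ * (k⁻¹ * k') * (σqs a) := by group
      rw [this]
      exact hconj (σqs a) (hNmem a ha) _ hkk'
    · funext x
      induction x using QuotientGroup.induction_on with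
      | H k =>
        show ((c * σqs (c * σqs k * n * a) * n : G) : G ⧸ H)
            = ((k * σqs a : G) : G ⧸ H)
        apply QuotientGroup.eq.mpr
        -- key membership computation
        have snH := hNmem n hn
        have saH := hNmem a ha
        have comm : (σqs n)⁻¹ * (σqs a)⁻¹ * σqs n * σqs a ∈ H := by
          have := hab _ (inv_mem snH) _ (inv_mem saH)
          simpa using this
        have h2 : n⁻¹ * ((σqs n)⁻¹ * (σqs a)⁻¹ * σqs n * σqs a) * n ∈ H :=
          hconj n hn _ comm
        have hkeyel : (σqs a)⁻¹ * (c * σqs c * σqs n) * σqs a * n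
            = (c * σqs c * σqs n * n) *
              (n⁻¹ * ((σqs n)⁻¹ * (σqs a)⁻¹ * σqs n * σqs a) * n) := by
          rw [show (σqs a)⁻¹ * (c * σqs c * σqs n) = ((σqs a)⁻¹ * (c * σqs c)) * σqs n by
            group, hz (σqs a)⁻¹]
          group
        have hkey : (σqs a)⁻¹ * (c * σqs c * σqs n) * σqs a * n ∈ H := by
          rw [hkeyel]; exact mul_mem hcn h2
        have hkeyinv : n⁻¹ * (σqs a)⁻¹ * (σqs n)⁻¹ * (c * σqs c)⁻¹ * σqs a ∈ H := by
          have := inv_mem hkey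
          simpa [mul_assoc] using this
        have heq : (c * σqs (c * σqs k * n * a) * n)⁻¹ * (k * σqs a)
            = n⁻¹ * (σqs a)⁻¹ * (σqs n)⁻¹ * (c * σqs c)⁻¹ * σqs a := by
          have hck : σqs c * k = c⁻¹ * k * (c * σqs c) := by
            rw [show c⁻¹ * k * (c * σqs c) = c⁻¹ * (k * (c * σqs c)) by group, hz k]
            group
          simp only [map_mul, hσ]
          rw [hck]
          group
        rw [heq]
        exact hkeyinv
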